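/- Let m̄ ≥ 1 be an integer, n' = 2^m̄ − 1, and n̄ ≥ n'. Let V₀ ⊆ 𝔽₂^{n'} be the kernel of an m̄ × n' matrix over 𝔽₂ whose columns are exactly the distinct nonzero vectors of 𝔽₂^{m̄}. Let S ⊆ {0,…,n̄−1} with |S| = n', let p ∈ S, and let 𝔽 be a field. Suppose σ, σ' : 𝔽₂^{n̄} → 𝔽 satisfy, for every a ∈ 𝔽₂^{n̄} with a|_S ∈ V₀: (i) σ(a) = σ'(a); (ii) σ(a + e_p) = σ'(a + e_p); and (iii) σ(a) + σ(a + e_i) = σ'(a) + σ'(a + e_i) for every i ∈ S∖{p}. Then σ = σ'. -/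

import Mathlib

/-- Flip the `i`-th coordinate of a binary vector (the paper's `a + e_i`). -/
def flipCoord (a : ℕ → ZMod 2) (i : ℕ) : ℕ → ZMod 2 :=
  Function.update a i (a i + 1)

lemma flipCoord_flipCoord (a : ℕ → ZMod 2) (i : ℕ) : flipCoord (flipCoord a i) i = a := by
  funext t
  by_cases h : t = i
  · subst h
    have : ∀ x : ZMod 2, x + 1 + 1 = x := by decide
    simp [flipCoord, this]
  · simp [flipCoord, Function.update_of_ne h]

/-- **Abstract form of Lemma 6 of the paper** (cooperative phase of the second
construction): let `V₀ ⊆ 𝔽₂^{n'}` be the Hamming code (kernel of an `mbar × n'` matrix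
whose columns are the distinct nonzero vectors of `𝔽₂^{mbar}`, `n' = 2^{mbar} − 1`),
let `S ⊆ {0,…,nbar−1}` with `|S| = n'` and `p ∈ S`.  If `σ, σ' : 𝔽₂^{nbar} → 𝔽` agree,
for every `a` whose restriction to `S` (in increasing order) lies in `V₀`, on (i) `σ a`,
(ii) `σ (a + e_p)`, and (iii) the sums `σ a + σ (a + e_i)` for every `i ∈ S∖{p}`,
then `σ = σ'`. -/
theorem stmt17 {𝔽 : Type*} [Field 𝔽]
    (mbar n' nbar : ℕ) (hmbar : 1 ≤ mbar) (hn' : n' = 2 ^ mbar - 1) (hnbar : n' ≤ nbar)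
    (Hm : Matrix (Fin mbar) (Fin n') (ZMod 2))
    (hinj : Function.Injective fun j i => Hm i j)
    (hnz : ∀ j, (fun i => Hm i j) ≠ 0)
    (V₀ : Set (Fin n' → ZMod 2)) (hV₀ : V₀ = {f | Hm.mulVec f = 0})
    (S : Finset ℕ) (hSsub : S ⊆ Finset.range nbar) (hScard : S.card = n')
    (p : ℕ) (hp : p ∈ S)
    (σ σ' : (ℕ → ZMod 2) → 𝔽)
    (h1 : ∀ a : ℕ → ZMod 2,
      (fun t : Fin n' => a ((S.orderIsoOfFin hScard t : ℕ))) ∈ V₀ → σ a = σ' a)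
    (h2 : ∀ a : ℕ → ZMod 2,
      (fun t : Fin n' => a ((S.orderIsoOfFin hScard t : ℕ))) ∈ V₀ →
      σ (flipCoord a p) = σ' (flipCoord a p))
    (h3 : ∀ a : ℕ → ZMod 2,
      (fun t : Fin n' => a ((S.orderIsoOfFin hScard t : ℕ))) ∈ V₀ →
      ∀ i ∈ S, i ≠ p →
        σ a + σ (flipCoord a i) = σ' a + σ' (flipCoord a i)) :
    σ = σ' := by
  subst hV₀
  funext a
  set oi := S.orderIsoOfFin hScard with hoi
  set f : Fin n' → ZMod 2 := fun t => a (oi t) with hf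
  by_cases hs : Hm.mulVec f = 0
  · exact h1 a hs
  · -- the column map is bijective onto nonzero vectors
    set F : Fin n' → {v : Fin mbar → ZMod 2 // v ≠ 0} :=
      fun j => ⟨fun i => Hm i j, hnz j⟩ with hF
    have hFinj : Function.Injective F := by
      intro x y hxy
      exact hinj (congrArg Subtype.val hxy)
    have hcard : Fintype.card {v : Fin mbar → ZMod 2 // v ≠ 0} = n' := by
      rw [Fintype.card_subtype_compl, Fintype.card_subtype_eq]
      simp [hn', Fintype.card_fun]
    have hFbij : Function.Bijective F := by
      rw [Fintype.bijective_iff_injective_and_card]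
      exact ⟨hFinj, by simp [hcard]⟩
    obtain ⟨j, hj⟩ := hFbij.2 ⟨Hm.mulVec f, hs⟩
    have hcol : (fun i => Hm i j) = Hm.mulVec f := congrArg Subtype.val hj
    set i := (oi j : ℕ) with hi
    have hiS : i ∈ S := (oi j).2
    set b := flipCoord a i with hb
    have hrest : (fun t : Fin n' => b (oi t)) = f + Pi.single j 1 := by
      funext t
      by_cases ht : t = j
      · subst ht
        simp [hb, flipCoord, hf, hi]
      · have hne : (oi t : ℕ) ≠ i := by
          intro h
          exact ht (oi.injective (Subtype.coe_injective h))
        simp [hb, flipCoord, Function.update_of_ne hne, hf, Pi.single_eq_of_ne ht]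
    have hbV : Hm.mulVec (fun t : Fin n' => b (oi t)) = 0 := by
      rw [hrest, Matrix.mulVec_add]
      have hsingle : Hm.mulVec (Pi.single j 1) = fun i => Hm i j := by
        funext r
        simp [Matrix.mulVec, dotProduct, Pi.single_apply, Finset.sum_ite_eq']
      rw [hsingle, hcol]
      funext r
      have : ∀ x : ZMod 2, x + x = 0 := by decide
      simp [this]
    have hbV' : (fun t : Fin n' => b (oi t)) ∈ {g : Fin n' → ZMod 2 | Hm.mulVec g = 0} := hbV
    have hba : flipCoord b i = a := flipCoord_flipCoord a i
    by_cases hip : i = p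
    · have := h2 b hbV'
      rw [hip] at hba
      rwa [hba] at this
    · have h3' := h3 b hbV' i hiS hip
      rw [hba, h1 b hbV'] at h3'
      exact add_left_cancel h3'
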